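/- Let Γ be a finite directed graph and let L be a closed inverse subsemigroup of S(Γ) of finite chain type with minimal element (w,w). Then L has infinite index in S(Γ) if and only if there exist a nonempty directed circuit c in Γ and a (possibly empty) directed path g from some vertex v₀ of w to a vertex of c, such that g has no edge in common with c or with w. -/

import Mathlib

/-- A (finite) directed graph: vertices, edges, and source/target maps. -/
structure DGraph where
  V : Type
  E : Type
  src : E → V
  tgt : E → V

namespace DGraph

/-- The vertex reached after traversing a list of edges from a vertex. -/
def walkEnd (G : DGraph) : G.V → List G.E → G.V
  | v, [] => v
  | _, e :: l => walkEnd G (G.tgt e) l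

/-- The list of edges forms a directed walk starting at the given vertex. -/
def IsWalk (G : DGraph) : G.V → List G.E → Prop
  | _, [] => True
  | v, e :: l => G.src e = v ∧ IsWalk G (G.tgt e) l

variable (G : DGraph)

@[simp] theorem walkEnd_nil (v : G.V) : G.walkEnd v [] = v := rfl
@[simp] theorem walkEnd_cons (v : G.V) (e : G.E) (l : List G.E) :
    G.walkEnd v (e :: l) = G.walkEnd (G.tgt e) l := rfl
@[simp] theorem isWalk_nil (v : G.V) : G.IsWalk v [] := trivial
@[simp] theorem isWalk_cons (v : G.V) (e : G.E) (l : List G.E) :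
    G.IsWalk v (e :: l) ↔ G.src e = v ∧ G.IsWalk (G.tgt e) l := Iff.rfl

theorem isWalk_append (v : G.V) (l1 l2 : List G.E) :
    G.IsWalk v (l1 ++ l2) ↔ G.IsWalk v l1 ∧ G.IsWalk (G.walkEnd v l1) l2 := by
  induction l1 generalizing v with
  | nil => simp [IsWalk, walkEnd]
  | cons e l ih => simp [IsWalk, walkEnd, ih, and_assoc]

/-- A directed path in `G`: an initial vertex together with a compatible
list of edges, traversed in order (empty paths are allowed). -/
structure DPath (G : DGraph) where
  first : G.V
  edges : List G.E
  wf : G.IsWalk first edges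

namespace DPath

variable {G}

/-- The terminal vertex of a directed path. -/
def last (p : G.DPath) : G.V := G.walkEnd p.first p.edges

/-- The list of vertices lying on a directed path. -/
def vertexList (p : G.DPath) : List G.V := p.first :: p.edges.map G.tgt

/-- `q` is a suffix (terminal segment) of `p`: `p = l ⬝ q` for some edge list `l`. -/
def IsSuffixOf (q p : G.DPath) : Prop :=
  ∃ l : List G.E, p.edges = l ++ q.edges ∧ q.first = G.walkEnd p.first l

end DPath

theorem isWalk_chopAppend {u v w : G.DPath} (hs : v.IsSuffixOf u) (hvw : v.first = w.first) :
    G.IsWalk u.first (u.edges.take (u.edges.length - v.edges.length) ++ w.edges) := by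
  obtain ⟨l, hl, hfst⟩ := hs
  rw [hl]
  have hlen : (l ++ v.edges).length - v.edges.length = l.length := by simp
  rw [hlen, List.take_left, G.isWalk_append]
  have hu := u.wf
  rw [hl, G.isWalk_append] at hu
  refine ⟨hu.1, ?_⟩
  rw [← hfst, hvw]
  exact w.wf

theorem isWalk_concat {p q : G.DPath} (h : q.first = p.last) :
    G.IsWalk p.first (p.edges ++ q.edges) := by
  rw [G.isWalk_append]
  refine ⟨p.wf, ?_⟩
  show G.IsWalk p.last q.edges
  rw [← h]
  exact q.wf

/-- Concatenation of composable directed paths. -/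
def concatPath (p q : G.DPath) (h : q.first = p.last) : G.DPath :=
  ⟨p.first, p.edges ++ q.edges, G.isWalk_concat h⟩

theorem isWalk_replicate (a : G.E) (h : G.tgt a = G.src a) (m : ℕ) :
    G.IsWalk (G.src a) (List.replicate m a) := by
  induction m with
  | zero => trivial
  | succ n ih => rw [List.replicate_succ, G.isWalk_cons]; exact ⟨rfl, by rw [h]; exact ih⟩

/-- The path traversing a loop `a` exactly `m` times. -/
def loopPow (a : G.E) (h : G.tgt a = G.src a) (m : ℕ) : G.DPath :=
  ⟨G.src a, List.replicate m a, G.isWalk_replicate a h m⟩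

/-- `p` is a nonempty directed circuit. -/
def IsCircuit (p : G.DPath) : Prop := p.edges ≠ [] ∧ p.last = p.first

/-- `p` and `d` share no nontrivial common prefix (initial segment). -/
def NoCommonPrefix (p d : G.DPath) : Prop :=
  ∀ l : List G.E, l ≠ [] → l <+: p.edges → ¬ l <+: d.edges

end DGraph

/-- The underlying set of the graph inverse semigroup `S(Γ)`: pairs of directed
paths with the same initial vertex, together with a zero element. -/
inductive GIS (G : DGraph) where
  | zero : GIS G
  | pair (a b : G.DPath) (h : a.first = b.first) : GIS G

namespace GIS

open scoped Classical in
/-- The multiplication of the graph inverse semigroup: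
`(t,u)(v,w) = (t,pw)` if `u = pv`, `(pt,w)` if `v = pu`, and `0` otherwise. -/
noncomputable def mul {G : DGraph} : GIS G → GIS G → GIS G
  | .zero, _ => .zero
  | .pair _ _ _, .zero => .zero
  | .pair t u h1, .pair v w h2 =>
    if hs : v.IsSuffixOf u then
      .pair t ⟨t.first, u.edges.take (u.edges.length - v.edges.length) ++ w.edges,
        by rw [h1]; exact G.isWalk_chopAppend hs h2⟩ rfl
    else if hs' : u.IsSuffixOf v then
      .pair ⟨v.first, v.edges.take (v.edges.length - u.edges.length) ++ t.edges,
        G.isWalk_chopAppend hs' h1.symm⟩ w h2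
    else .zero

noncomputable instance {G : DGraph} : Mul (GIS G) := ⟨GIS.mul⟩

/-- The inverse: `(v,w)⁻¹ = (w,v)` and `0⁻¹ = 0`. -/
def inv {G : DGraph} : GIS G → GIS G
  | .zero => .zero
  | .pair a b h => .pair b a h.symm

/-- The natural partial order: `x ≤ y` iff `x = e * y` for some idempotent `e`. -/
def le {G : DGraph} (x y : GIS G) : Prop := ∃ e : GIS G, e * e = e ∧ x = e * y

end GIS

/-- `L` is a closed inverse subsemigroup of `S(Γ)`: a nonempty subset closed under
multiplication, inverses, and upward closed in the natural partial order. -/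
def IsCISS (G : DGraph) (L : Set (GIS G)) : Prop :=
  L.Nonempty ∧ (∀ a ∈ L, ∀ b ∈ L, a * b ∈ L) ∧ (∀ a ∈ L, a.inv ∈ L) ∧
    (∀ a ∈ L, ∀ s : GIS G, GIS.le a s → s ∈ L)

/-- The closed inverse subsemigroup `↑{(u,u)}` of (finite) chain type:
all `(q,q)` with `q` a suffix of `u`. -/
def chainSet (G : DGraph) (u : G.DPath) : Set (GIS G) :=
  {x | ∃ q : G.DPath, q.IsSuffixOf u ∧ x = GIS.pair q q rfl}

/-- The edge list of the `r`-th power of the path `p`. -/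
def powEdges {G : DGraph} (p : G.DPath) (r : ℕ) : List G.E :=
  (List.replicate r p.edges).flatten

/-- The closed inverse subsemigroup of cycle type
`L_{p,d} = {(v p^r d, v p^s d) : r,s ≥ 0, v a suffix of p} ∪ {(q,q) : q a suffix of d}`. -/
def cycleSet (G : DGraph) (p d : G.DPath) : Set (GIS G) :=
  {x | (∃ (r s : ℕ) (v a b : G.DPath) (h : a.first = b.first),
          v.IsSuffixOf p ∧ x = GIS.pair a b h ∧
          a.first = v.first ∧ a.edges = v.edges ++ powEdges p r ++ d.edges ∧
          b.first = v.first ∧ b.edges = v.edges ++ powEdges p s ++ d.edges) ∨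
       (∃ q : G.DPath, q.IsSuffixOf d ∧ x = GIS.pair q q rfl)}

/-- `L` is a chain of idempotents: all elements are idempotent and any two are
comparable in the natural partial order. -/
def IsChainOfIdem (G : DGraph) (L : Set (GIS G)) : Prop :=
  (∀ x ∈ L, x * x = x) ∧ ∀ x ∈ L, ∀ y ∈ L, GIS.le x y ∨ GIS.le y x

/-- The set of right cosets `↑(Lt)` (for `t` with `t t⁻¹ ∈ L`) of a closed inverse
subsemigroup `L`. -/
def cosets (G : DGraph) (L : Set (GIS G)) : Set (Set (GIS G)) :=
  {C | ∃ t : GIS G, t * t.inv ∈ L ∧ C = {s | ∃ x ∈ L, GIS.le (x * t) s}}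

/-- `H` and `K` are conjugate: for some `s`, `s⁻¹Hs ⊆ K` and `sKs⁻¹ ⊆ H`. -/
def Conjugate (G : DGraph) (H K : Set (GIS G)) : Prop :=
  ∃ s : GIS G, (∀ h ∈ H, s.inv * h * s ∈ K) ∧ (∀ k ∈ K, s * k * s.inv ∈ H)

/-- The set of directed paths with initial vertex `v` whose first edge (if any)
is not an edge of `w`. -/
def Npaths (G : DGraph) (v : G.V) (w : G.DPath) : Set G.DPath :=
  {t | t.first = v ∧ ∀ e, t.edges.head? = some e → e ∉ w.edges}

section Aux

namespace DGraph
variable {G : DGraph}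

theorem walkEnd_append (v : G.V) (l1 l2 : List G.E) :
    G.walkEnd v (l1 ++ l2) = G.walkEnd (G.walkEnd v l1) l2 := by
  induction l1 generalizing v with
  | nil => rfl
  | cons e l ih => simp [walkEnd, ih]

theorem isWalk_take {v : G.V} {l : List G.E} (h : G.IsWalk v l) (n : ℕ) :
    G.IsWalk v (l.take n) := by
  have h2 := (G.isWalk_append v (l.take n) (l.drop n))
  rw [List.take_append_drop] at h2
  exact (h2.1 h).1

theorem isWalk_drop {v : G.V} {l : List G.E} (h : G.IsWalk v l) (n : ℕ) :
    G.IsWalk (G.walkEnd v (l.take n)) (l.drop n) := by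
  have h2 := (G.isWalk_append v (l.take n) (l.drop n))
  rw [List.take_append_drop] at h2
  exact (h2.1 h).2

namespace DPath

theorem ext' {p q : G.DPath} (h1 : p.first = q.first) (h2 : p.edges = q.edges) : p = q := by
  cases p; cases q; cases h1; cases h2; rfl

theorem suffix_refl (p : G.DPath) : p.IsSuffixOf p := ⟨[], rfl, rfl⟩

theorem IsSuffixOf.length_le {p q : G.DPath} (h : q.IsSuffixOf p) :
    q.edges.length ≤ p.edges.length := by
  obtain ⟨l, hl, -⟩ := h; simp [hl]

theorem mem_aux (G : DGraph) : ∀ (l : List G.E) (v x : G.V),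
    x ∈ v :: l.map G.tgt ↔ ∃ i, i ≤ l.length ∧ x = G.walkEnd v (l.take i) := by
  intro l
  induction l with
  | nil =>
    intro v x
    constructor
    · intro h; exact ⟨0, le_refl _, by simpa using h⟩
    · rintro ⟨i, hi, hx⟩; simp at hx ⊢; exact hx
  | cons e l ih =>
    intro v x
    constructor
    · intro h
      rcases List.mem_cons.1 h with h | h
      · exact ⟨0, Nat.zero_le _, h⟩
      · obtain ⟨i, hi, hx⟩ := (ih (G.tgt e) x).1 h
        exact ⟨i + 1, by simpa using hi, by simpa [walkEnd] using hx⟩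
    · rintro ⟨i, hi, hx⟩
      cases i with
      | zero => exact List.mem_cons.2 (Or.inl (by simpa using hx))
      | succ i =>
        refine List.mem_cons.2 (Or.inr ((ih (G.tgt e) x).2 ⟨i, by simpa using hi, ?_⟩))
        simpa [walkEnd] using hx

theorem mem_vertexList_iff {p : G.DPath} {x : G.V} :
    x ∈ p.vertexList ↔ ∃ i, i ≤ p.edges.length ∧ x = G.walkEnd p.first (p.edges.take i) :=
  mem_aux G p.edges p.first x

theorem tgt_mem_vertexList {p : G.DPath} {e : G.E} (h : e ∈ p.edges) :
    G.tgt e ∈ p.vertexList :=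
  List.mem_cons.2 (Or.inr (List.mem_map_of_mem h))

theorem src_mem_aux (G : DGraph) : ∀ (l : List G.E) (v : G.V) (e : G.E),
    G.IsWalk v l → e ∈ l → G.src e ∈ v :: l.map G.tgt := by
  intro l
  induction l with
  | nil => intro v e _ h; simp at h
  | cons a l ih =>
    intro v e hw he
    rcases List.mem_cons.1 he with h | h
    · subst h; exact List.mem_cons.2 (Or.inl hw.1)
    · have := ih (G.tgt a) e hw.2 h
      rcases List.mem_cons.1 this with h' | h'
      · exact List.mem_cons.2 (Or.inr (by rw [h']; exact List.mem_cons.2 (Or.inl rfl)))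
      · exact List.mem_cons.2 (Or.inr (List.mem_cons.2 (Or.inr (by simpa using h'))))

theorem src_mem_vertexList {p : G.DPath} {e : G.E} (h : e ∈ p.edges) :
    G.src e ∈ p.vertexList :=
  src_mem_aux G p.edges p.first e p.wf h

theorem suffix_trichotomy {q r w : G.DPath} (hq : q.IsSuffixOf w) (hr : r.IsSuffixOf w) :
    q.IsSuffixOf r ∨ r.IsSuffixOf q := by
  obtain ⟨l1, e1, f1⟩ := hq
  obtain ⟨l2, e2, f2⟩ := hr
  have hpre : l1 <+: l2 ∨ l2 <+: l1 :=
    List.prefix_or_prefix_of_prefix ⟨q.edges, e1.symm⟩ ⟨r.edges, e2.symm⟩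
  rcases hpre with ⟨l, hl⟩ | ⟨l, hl⟩
  · -- l2 = l1 ++ l, so r is deeper: r.IsSuffixOf q
    right
    subst hl
    have he : q.edges = l ++ r.edges := by
      apply List.append_cancel_left (as := l1)
      rw [← e1, e2, List.append_assoc]
    refine ⟨l, he, ?_⟩
    rw [f1, f2, ← G.walkEnd_append]
  · left
    subst hl
    have he : r.edges = l ++ q.edges := by
      apply List.append_cancel_left (as := l2)
      rw [← e2, e1, List.append_assoc]
    refine ⟨l, he, ?_⟩
    rw [f1, f2, ← G.walkEnd_append]

end DPath
end DGraph

end Aux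

namespace GIS
variable {G : DGraph}

theorem mul_pair_pos {t u v w' : G.DPath} (h1 : t.first = u.first) (h2 : v.first = w'.first)
    (hs : v.IsSuffixOf u) :
    (GIS.pair t u h1) * (GIS.pair v w' h2) =
      GIS.pair t ⟨t.first, u.edges.take (u.edges.length - v.edges.length) ++ w'.edges,
        by rw [h1]; exact G.isWalk_chopAppend hs h2⟩ rfl := by
  show GIS.mul _ _ = _
  simp only [GIS.mul, dif_pos hs]

theorem mul_pair_neg_pos {t u v w' : G.DPath} (h1 : t.first = u.first) (h2 : v.first = w'.first)
    (hs : ¬ v.IsSuffixOf u) (hs' : u.IsSuffixOf v) :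
    (GIS.pair t u h1) * (GIS.pair v w' h2) =
      GIS.pair ⟨v.first, v.edges.take (v.edges.length - u.edges.length) ++ t.edges,
        G.isWalk_chopAppend hs' h1.symm⟩ w' h2 := by
  show GIS.mul _ _ = _
  simp only [GIS.mul, dif_neg hs, dif_pos hs']

theorem mul_pair_neg_neg {t u v w' : G.DPath} (h1 : t.first = u.first) (h2 : v.first = w'.first)
    (hs : ¬ v.IsSuffixOf u) (hs' : ¬ u.IsSuffixOf v) :
    (GIS.pair t u h1) * (GIS.pair v w' h2) = GIS.zero := by
  show GIS.mul _ _ = _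
  simp only [GIS.mul, dif_neg hs, dif_neg hs']

theorem pair_inj {a a' b b' : G.DPath} {h : a.first = b.first} {h' : a'.first = b'.first}
    (H : GIS.pair a b h = GIS.pair a' b' h') : a = a' ∧ b = b' := by
  injection H with h1 h2
  exact ⟨h1, h2⟩

theorem pair_eq {a a' b b' : G.DPath} {h : a.first = b.first} {h' : a'.first = b'.first}
    (ha : a = a') (hb : b = b') : GIS.pair a b h = GIS.pair a' b' h' := by
  subst ha; subst hb; rfl

theorem mul_pair_self (q b : G.DPath) (h : q.first = b.first) :
    (GIS.pair q q rfl) * (GIS.pair q b h) = GIS.pair q b h := by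
  rw [mul_pair_pos rfl h (DGraph.DPath.suffix_refl q)]
  exact pair_eq rfl (DGraph.DPath.ext' h (by simp))

theorem mul_inv_pair (a b : G.DPath) (h : a.first = b.first) :
    (GIS.pair a b h) * (GIS.pair a b h).inv = GIS.pair a a rfl := by
  show (GIS.pair a b h) * (GIS.pair b a h.symm) = _
  rw [mul_pair_pos h h.symm (DGraph.DPath.suffix_refl b)]
  exact pair_eq rfl (DGraph.DPath.ext' rfl (by simp))

theorem mul_second {e : GIS G} {q b A B : G.DPath} {h : q.first = b.first}
    {hAB : A.first = B.first}
    (hE : e * GIS.pair q b h = GIS.pair A B hAB) : ∃ y, B.edges = y ++ b.edges := by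
  cases e with
  | zero => exact absurd hE (fun H => by cases H)
  | pair p1 p2 hp =>
    by_cases hs : q.IsSuffixOf p2
    · rw [mul_pair_pos hp h hs] at hE
      refine ⟨p2.edges.take (p2.edges.length - q.edges.length), ?_⟩
      rw [← (pair_inj hE).2]
    · by_cases hs' : p2.IsSuffixOf q
      · rw [mul_pair_neg_pos hp h hs hs'] at hE
        exact ⟨[], by rw [← (pair_inj hE).2]; simp⟩
      · rw [mul_pair_neg_neg hp h hs hs'] at hE
        exact absurd hE (fun H => by cases H)

theorem chain_mul {w r q b : G.DPath} (h : q.first = b.first)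
    (hr : r.IsSuffixOf w) (hq : q.IsSuffixOf w) :
    ∃ (A B : G.DPath) (hAB : A.first = B.first) (z : List G.E),
      (GIS.pair r r rfl) * (GIS.pair q b h) = GIS.pair A B hAB ∧
      B.edges = z ++ b.edges ∧ z.length ≤ w.edges.length := by
  by_cases hs : q.IsSuffixOf r
  · refine ⟨r, ⟨r.first, r.edges.take (r.edges.length - q.edges.length) ++ b.edges,
        by exact G.isWalk_chopAppend hs h⟩, rfl, r.edges.take (r.edges.length - q.edges.length),
      mul_pair_pos rfl h hs, rfl, ?_⟩
    exact le_trans (by simp [List.length_take]) hr.length_le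
  · rcases DGraph.DPath.suffix_trichotomy hq hr with hs2 | hs'
    · exact absurd hs2 hs
    · exact ⟨⟨q.first, q.edges.take (q.edges.length - r.edges.length) ++ r.edges,
          G.isWalk_chopAppend hs' rfl⟩, b, h, [], mul_pair_neg_pos rfl h hs hs', by simp, by simp⟩

end GIS

theorem flatten_rep_len {α : Type*} (C : List α) (n : ℕ) :
    (List.replicate n C).flatten.length = n * C.length := by
  induction n with
  | zero => simp
  | succ k ih => simp [List.replicate_succ, ih, Nat.succ_mul, Nat.add_comm]

theorem loop_walk (G : DGraph) {v : G.V} {C : List G.E} (hw : G.IsWalk v C)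
    (he : G.walkEnd v C = v) (n : ℕ) :
    G.IsWalk v (List.replicate n C).flatten ∧
      G.walkEnd v (List.replicate n C).flatten = v := by
  induction n with
  | zero => exact ⟨trivial, rfl⟩
  | succ k ih =>
    rw [List.replicate_succ, List.flatten_cons, G.isWalk_append, G.walkEnd_append, he]
    exact ⟨⟨hw, ih.1⟩, ih.2⟩

/-- The path `g ⬝ C^n` starting at `q.first`. -/
def bpath (G : DGraph) (q g : G.DPath) (C : List G.E) (hqg : q.first = g.first)
    (hwalkC : G.IsWalk g.last C) (hendC : G.walkEnd g.last C = g.last) (n : ℕ) : G.DPath :=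
  ⟨q.first, g.edges ++ (List.replicate n C).flatten, by
    rw [G.isWalk_append, hqg]
    exact ⟨g.wf, (loop_walk G hwalkC hendC n).1⟩⟩

theorem infinite_cosets_of (G : DGraph) (w q g : G.DPath) (C : List G.E)
    (hq : q.IsSuffixOf w) (hqg : q.first = g.first)
    (hwalkC : G.IsWalk g.last C) (hendC : G.walkEnd g.last C = g.last)
    (hCpos : 0 < C.length) :
    (cosets G (chainSet G w)).Infinite := by
  classical
  set b : ℕ → G.DPath := bpath G q g C hqg hwalkC hendC with hbdef
  have hbe : ∀ n, (b n).edges = g.edges ++ (List.replicate n C).flatten := fun n => rfl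
  have hqb : ∀ n, q.first = (b n).first := fun n => rfl
  set τ : ℕ → GIS G := fun n => GIS.pair q (b n) (hqb n) with hτdef
  set Cs : ℕ → Set (GIS G) := fun n => {s | ∃ x ∈ chainSet G w, GIS.le (x * τ n) s} with hCsdef
  have hmem : ∀ n, Cs n ∈ cosets G (chainSet G w) := by
    intro n
    refine ⟨τ n, ?_, rfl⟩
    show GIS.pair q (b n) (hqb n) * (GIS.pair q (b n) (hqb n)).inv ∈ chainSet G w
    rw [GIS.mul_inv_pair]
    exact ⟨q, hq, rfl⟩
  have hself : ∀ n, τ n ∈ Cs n := by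
    intro n
    exact ⟨GIS.pair q q rfl, ⟨q, hq, rfl⟩,
      GIS.pair q q rfl, GIS.mul_pair_self q q rfl, rfl⟩
  have hdist : ∀ n m : ℕ, w.edges.length < (m - n) * C.length → τ m ∉ Cs n := by
    rintro n m hnm ⟨x, hx, hle⟩
    obtain ⟨r, hr, rfl⟩ := hx
    obtain ⟨A, B, hAB, z, heq, hz1, hz2⟩ := GIS.chain_mul (hqb n) hr hq
    obtain ⟨e, -, hE⟩ := hle
    have hE' : GIS.pair A B hAB = e * GIS.pair q (b m) (hqb m) := by
      rw [← heq]; exact hE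
    obtain ⟨y, hy⟩ := GIS.mul_second hE'.symm
    have hlen1 : B.edges.length = z.length + (g.edges.length + n * C.length) := by
      rw [hz1]; simp [hbe, flatten_rep_len]
    have hlen2 : B.edges.length = y.length + (g.edges.length + m * C.length) := by
      rw [hy]; simp [hbe, flatten_rep_len]
    rw [Nat.sub_mul] at hnm
    omega
  set M := w.edges.length + 1 with hM
  have hne : ∀ a b' : ℕ, a < b' → Cs (a * M) ≠ Cs (b' * M) := by
    intro a b' hab hEq
    have hmem2 := hself (b' * M)
    rw [← hEq] at hmem2
    apply hdist (a * M) (b' * M) ?_ hmem2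
    calc w.edges.length < M := Nat.lt_succ_self _
      _ ≤ (b' - a) * M := Nat.le_mul_of_pos_left M (by omega)
      _ ≤ (b' - a) * M * C.length := Nat.le_mul_of_pos_right _ hCpos
      _ = (b' * M - a * M) * C.length := by rw [Nat.sub_mul]
  apply Set.infinite_of_injective_forall_mem (f := fun a : ℕ => Cs (a * M))
  · intro a b' hEq
    by_contra hab
    rcases Nat.lt_or_ge a b' with h | h
    · exact hne a b' h hEq
    · exact hne b' a (by omega) hEq.symm
  · exact fun a => hmem _

theorem backward_dir (G : DGraph) (w : G.DPath) (c g : G.DPath) (hc : G.IsCircuit c)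
    (h1 : g.first ∈ w.vertexList) (h2 : g.last ∈ c.vertexList) :
    (cosets G (chainSet G w)).Infinite := by
  classical
  obtain ⟨i, hi, hgl⟩ := DGraph.DPath.mem_vertexList_iff.1 h2
  obtain ⟨j, hj, hgf⟩ := DGraph.DPath.mem_vertexList_iff.1 h1
  have hfc : G.walkEnd g.last (c.edges.drop i) = c.first := by
    rw [hgl, ← G.walkEnd_append, List.take_append_drop]
    exact hc.2
  refine infinite_cosets_of G w
    ⟨g.first, w.edges.drop j, by rw [hgf]; exact G.isWalk_drop w.wf j⟩ g
    (c.edges.drop i ++ c.edges.take i)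
    ⟨w.edges.take j, (List.take_append_drop _ _).symm, hgf⟩ rfl ?_ ?_ ?_
  · rw [G.isWalk_append]
    constructor
    · rw [hgl]; exact G.isWalk_drop c.wf i
    · rw [hfc]; exact G.isWalk_take c.wf i
  · rw [G.walkEnd_append, hfc, ← hgl]
  · have : c.edges ≠ [] := hc.1
    simp only [List.length_append, List.length_drop, List.length_take]
    have := List.length_pos_iff.2 hc.1
    omega

theorem forward_dir (G : DGraph) [Fintype G.V] [Fintype G.E] (w : G.DPath)
    (hinf : (cosets G (chainSet G w)).Infinite) :
    ∃ c g : G.DPath, G.IsCircuit c ∧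
      g.first ∈ w.vertexList ∧ g.last ∈ c.vertexList ∧
      ∀ e ∈ g.edges, e ∉ c.edges ∧ e ∉ w.edges := by
  classical
  -- Step 1: a long path starting on w
  have key : ∃ p : G.DPath, p.first ∈ w.vertexList ∧ Fintype.card G.V ≤ p.edges.length := by
    by_contra hcon
    push_neg at hcon
    apply hinf
    set N := max (Fintype.card G.V) w.edges.length with hN
    have hP : ({p : G.DPath | p.edges.length ≤ N}).Finite := by
      have hfin : ((Set.univ : Set G.V) ×ˢ {l : List G.E | l.length ≤ N}).Finite :=
        Set.Finite.prod Set.finite_univ (List.finite_length_le G.E N)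
      have hsub : {p : G.DPath | p.edges.length ≤ N} ⊆
          (fun p : G.DPath => (p.first, p.edges)) ⁻¹'
            ((Set.univ : Set G.V) ×ˢ {l : List G.E | l.length ≤ N}) := by
        intro p hp; exact ⟨trivial, hp⟩
      refine Set.Finite.subset (Set.Finite.preimage ?_ hfin) hsub
      intro p _ p' _ hpq
      exact DGraph.DPath.ext' (congrArg Prod.fst hpq) (congrArg Prod.snd hpq)
    set pf : G.DPath × G.DPath → GIS G := fun pr =>
      if h : pr.1.first = pr.2.first then .pair pr.1 pr.2 h else .zero with hpf
    have hT : {t : GIS G | t * t.inv ∈ chainSet G w} ⊆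
        pf '' ({p : G.DPath | p.edges.length ≤ N} ×ˢ {p : G.DPath | p.edges.length ≤ N}) := by
      intro t ht
      cases t with
      | zero =>
        obtain ⟨q, -, hq⟩ := ht
        exact absurd hq (fun H => by cases H)
      | pair a b h =>
        have ht' : GIS.pair a b h * (GIS.pair a b h).inv ∈ chainSet G w := ht
        rw [GIS.mul_inv_pair] at ht'
        obtain ⟨q, hqsuf, hq⟩ := ht'
        obtain ⟨ha, -⟩ := GIS.pair_inj hq
        subst ha
        have hafir : a.first ∈ w.vertexList := by
          obtain ⟨l, hl, hfst⟩ := hqsuf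
          exact DGraph.DPath.mem_vertexList_iff.2
            ⟨l.length, by rw [hl]; simp, by rw [hfst, hl, List.take_left]⟩
        refine ⟨(a, b), ⟨le_trans hqsuf.length_le (le_max_right _ _), ?_⟩, by
          show pf (a, b) = _
          rw [hpf]; exact dif_pos h⟩
        have := hcon b (h ▸ hafir)
        exact le_trans (le_of_lt this) (le_max_left _ _)
    have hTfin : ({t : GIS G | t * t.inv ∈ chainSet G w}).Finite :=
      Set.Finite.subset (Set.Finite.image _ (Set.Finite.prod hP hP)) hT
    have : cosets G (chainSet G w) ⊆
        (fun t : GIS G => {s | ∃ x ∈ chainSet G w, GIS.le (x * t) s}) ''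
          {t : GIS G | t * t.inv ∈ chainSet G w} := by
      rintro C ⟨t, ht, rfl⟩
      exact ⟨t, ht, rfl⟩
    exact Set.Finite.subset (Set.Finite.image _ hTfin) this
  obtain ⟨p, hp1, hp2⟩ := key
  -- Step 2: extract a circuit
  have hrep : ∃ i j : Fin (p.edges.length + 1), (i : ℕ) < j ∧
      G.walkEnd p.first (p.edges.take i) = G.walkEnd p.first (p.edges.take j) := by
    obtain ⟨i, j, hne, hfeq⟩ := Fintype.exists_ne_map_eq_of_card_lt
      (fun i : Fin (p.edges.length + 1) => G.walkEnd p.first (p.edges.take i))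
      (by simpa using Nat.lt_succ_of_le hp2)
    rcases Nat.lt_or_ge (i : ℕ) j with h | h
    · exact ⟨i, j, h, hfeq⟩
    · refine ⟨j, i, ?_, hfeq.symm⟩
      rcases Nat.lt_or_ge (j : ℕ) i with h' | h'
      · exact h'
      · exact absurd (Fin.ext (le_antisymm h' h)) hne
  obtain ⟨i, j, hij, hfeq⟩ := hrep
  have hjle : (j : ℕ) ≤ p.edges.length := Nat.lt_succ_iff.1 j.2
  -- the circuit c0 and the path g0
  have hslice : G.IsWalk (G.walkEnd p.first (p.edges.take i)) ((p.edges.drop i).take (j - i)) :=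
    G.isWalk_take (G.isWalk_drop p.wf i) _
  set c0 : G.DPath := ⟨G.walkEnd p.first (p.edges.take i), (p.edges.drop i).take ((j : ℕ) - i),
    hslice⟩ with hc0
  have hc0circ : G.IsCircuit c0 := by
    constructor
    · show (p.edges.drop i).take ((j : ℕ) - i) ≠ []
      refine List.length_pos_iff.1 ?_
      simp only [List.length_take, List.length_drop]
      omega
    · show G.walkEnd _ _ = _
      rw [← G.walkEnd_append, ← List.take_add, Nat.add_sub_cancel' (le_of_lt hij)]
      exact hfeq.symm
  have hmain : ∃ n, ∃ g c : G.DPath, G.IsCircuit c ∧ g.first ∈ w.vertexList ∧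
      g.last ∈ c.vertexList ∧ g.edges.length = n := by
    refine ⟨(p.edges.take i).length, ⟨p.first, p.edges.take i, G.isWalk_take p.wf i⟩, c0,
      hc0circ, hp1, ?_, rfl⟩
    exact List.mem_cons.2 (Or.inl rfl)
  -- Step 3: minimize
  set S : Set ℕ := {n | ∃ g c : G.DPath, G.IsCircuit c ∧ g.first ∈ w.vertexList ∧
      g.last ∈ c.vertexList ∧ g.edges.length = n} with hS
  obtain ⟨g, c, hc, hg1, hg2, hglen⟩ := Nat.sInf_mem hmain
  refine ⟨c, g, hc, hg1, hg2, ?_⟩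
  intro e he
  constructor
  · -- e ∉ c.edges
    intro hec
    obtain ⟨l1, l2, hsplit⟩ := List.append_of_mem he
    have hwalk := g.wf
    rw [hsplit, G.isWalk_append] at hwalk
    have hlt : sInf S ≤ l1.length :=
      Nat.sInf_le ⟨⟨g.first, l1, hwalk.1⟩, c, hc, hg1, by
        show G.walkEnd g.first l1 ∈ c.vertexList
        rw [← hwalk.2.1]
        exact DGraph.DPath.src_mem_vertexList hec, rfl⟩
    have hglen' : g.edges.length = sInf S := hglen
    have hsl : g.edges.length = l1.length + l2.length + 1 := by
      rw [hsplit]; simp; omega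
    omega
  · -- e ∉ w.edges
    intro hew
    obtain ⟨l1, l2, hsplit⟩ := List.append_of_mem he
    have hwalk := g.wf
    rw [hsplit, G.isWalk_append] at hwalk
    have hlast : G.walkEnd (G.tgt e) l2 = g.last := by
      show _ = G.walkEnd g.first g.edges
      rw [hsplit, G.walkEnd_append]
      rfl
    have hlt : sInf S ≤ l2.length :=
      Nat.sInf_le ⟨⟨G.tgt e, l2, hwalk.2.2⟩, c, hc,
        DGraph.DPath.tgt_mem_vertexList hew, by
          show G.walkEnd (G.tgt e) l2 ∈ c.vertexList
          rw [hlast]; exact hg2, rfl⟩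
    have hglen' : g.edges.length = sInf S := hglen
    have hsl : g.edges.length = l1.length + l2.length + 1 := by
      rw [hsplit]; simp; omega
    omega

/-- a closed inverse subsemigroup of finite chain type with minimal
element `(w,w)` has infinite index iff there is a nonempty directed circuit `c` and
a (possibly empty) path `g` from a vertex of `w` to a vertex of `c` having no edge
in common with `c` or with `w`. -/
theorem stmt_14 (G : DGraph) [Fintype G.V] [Fintype G.E] (w : G.DPath) :
    (cosets G (chainSet G w)).Infinite ↔
      ∃ c g : G.DPath, G.IsCircuit c ∧
        g.first ∈ w.vertexList ∧ g.last ∈ c.vertexList ∧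
        ∀ e ∈ g.edges, e ∉ c.edges ∧ e ∉ w.edges := by
  constructor
  · exact forward_dir G w
  · rintro ⟨c, g, hc, h1, h2, -⟩
    exact backward_dir G w c g hc h1 h2
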